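/- Let h : [-1,0] → ℝ be real-analytic (Gevrey of order 1) and suppose that for all n ∈ ℕ: Pⁿh(0) = 0, ∂ₓPⁿh(0) = 0, and ∂ₓ²Pⁿh(0) = 0, where P = ∂ₓ³ + a∂ₓ. Then h ≡ 0 on [-1,0]. -/

import Mathlib

/-- The operator `P f = f''' + a f'`. -/
noncomputable def Pop (a : ℝ) (f : ℝ → ℝ) : ℝ → ℝ :=
  fun x => iteratedDeriv 3 f x + a * deriv f x

lemma iteratedDeriv_iteratedDeriv (m n : ℕ) (f : ℝ → ℝ) :
    iteratedDeriv m (iteratedDeriv n f) = iteratedDeriv (m + n) f := by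
  simp only [iteratedDeriv_eq_iterate, Function.iterate_add_apply]

lemma iteratedDeriv_of_isOpen {S : Set ℝ} (hS : IsOpen S) {x : ℝ} (hx : x ∈ S)
    (n : ℕ) (f : ℝ → ℝ) : iteratedDerivWithin n f S x = iteratedDeriv n f x := by
  rw [iteratedDerivWithin_eq_iteratedFDerivWithin, iteratedDeriv_eq_iteratedFDeriv,
    iteratedFDerivWithin_of_isOpen n hS hx]

lemma pop_analytic (a : ℝ) {S : Set ℝ} (f : ℝ → ℝ) (hf : AnalyticOnNhd ℝ f S) :
    AnalyticOnNhd ℝ (Pop a f) S := by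
  have hd3 : AnalyticOnNhd ℝ (iteratedDeriv 3 f) S := by
    have : iteratedDeriv 3 f = deriv (deriv (deriv f)) := by
      simp [iteratedDeriv_eq_iterate]
    rw [this]
    exact hf.deriv.deriv.deriv
  intro x hx
  exact (hd3 x hx).add ((analyticAt_const).mul (hf.deriv x hx))

lemma iter_pop (a : ℝ) {S : Set ℝ} (hS : IsOpen S) {x : ℝ} (hx : x ∈ S) (f : ℝ → ℝ)
    (hf : AnalyticOnNhd ℝ f S) (j : ℕ) :
    iteratedDeriv j (Pop a f) x =
      iteratedDeriv (j + 3) f x + a * iteratedDeriv (j + 1) f x := by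
  have hU : UniqueDiffOn ℝ S := hS.uniqueDiffOn
  have hd3 : AnalyticOnNhd ℝ (iteratedDeriv 3 f) S := by
    have : iteratedDeriv 3 f = deriv (deriv (deriv f)) := by
      simp [iteratedDeriv_eq_iterate]
    rw [this]; exact hf.deriv.deriv.deriv
  have hd1 : AnalyticOnNhd ℝ (deriv f) S := hf.deriv
  have heq : Pop a f = iteratedDeriv 3 f + a • deriv f := by
    funext y; simp [Pop, Pi.smul_apply, smul_eq_mul]
  calc iteratedDeriv j (Pop a f) x
      = iteratedDerivWithin j (Pop a f) S x := (iteratedDeriv_of_isOpen hS hx j _).symm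
    _ = iteratedDerivWithin j (iteratedDeriv 3 f) S x
        + iteratedDerivWithin j (a • deriv f) S x := by
        rw [heq]
        exact iteratedDerivWithin_add hx hU ((hd3.contDiffOn hU).contDiffWithinAt hx)
          (((hd1.contDiffOn hU).const_smul a).contDiffWithinAt hx)
    _ = iteratedDerivWithin j (iteratedDeriv 3 f) S x
        + a * iteratedDerivWithin j (deriv f) S x := by
        rw [iteratedDerivWithin_const_smul hx hU a ((hd1.contDiffOn hU).contDiffWithinAt hx), smul_eq_mul]
    _ = iteratedDeriv (j + 3) f x + a * iteratedDeriv (j + 1) f x := by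
        rw [iteratedDeriv_of_isOpen hS hx, iteratedDeriv_of_isOpen hS hx,
          iteratedDeriv_iteratedDeriv]
        congr 2
        rw [← iteratedDeriv_one (f := f), iteratedDeriv_iteratedDeriv]

/-- if `h` is real-analytic on `[-1,0]` and `Pⁿh(0) = ∂ₓPⁿh(0) =
∂ₓ²Pⁿh(0) = 0` for all `n`, where `P = ∂ₓ³ + a∂ₓ`, then `h ≡ 0` on `[-1,0]`. -/
theorem stmt13 (a : ℝ) (ha : 0 ≤ a) (h : ℝ → ℝ)
    (hanal : AnalyticOnNhd ℝ h (Set.Icc (-1 : ℝ) 0))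
    (h0 : ∀ n : ℕ, ((Pop a)^[n] h) 0 = 0)
    (h1 : ∀ n : ℕ, deriv ((Pop a)^[n] h) 0 = 0)
    (h2 : ∀ n : ℕ, iteratedDeriv 2 ((Pop a)^[n] h) 0 = 0) :
    ∀ x ∈ Set.Icc (-1 : ℝ) 0, h x = 0 := by
  set S : Set ℝ := {y | AnalyticAt ℝ h y} with hSdef
  have hSopen : IsOpen S := isOpen_analyticAt ℝ h
  have h0S : (0 : ℝ) ∈ S := hanal 0 (by simp)
  -- each iterate is analytic on S
  have hg : ∀ m : ℕ, AnalyticOnNhd ℝ ((Pop a)^[m] h) S := by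
    intro m
    induction m with
    | zero => exact fun x hx => hx
    | succ m ih =>
      rw [Function.iterate_succ_apply']
      exact pop_analytic a _ ih
  -- all iterated derivatives of all iterates vanish at 0
  have key : ∀ k : ℕ, ∀ m : ℕ, iteratedDeriv k ((Pop a)^[m] h) 0 = 0 := by
    intro k
    induction k using Nat.strong_induction_on with
    | _ k IH =>
      match k with
      | 0 => intro m; simpa using h0 m
      | 1 => intro m; simpa [iteratedDeriv_one] using h1 m
      | 2 => intro m; exact h2 m
      | (j + 3) =>
        intro m
        have := iter_pop a hSopen h0S ((Pop a)^[m] h) (hg m) j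
        rw [← Function.iterate_succ_apply' (Pop a) m h] at this
        have hj : iteratedDeriv j ((Pop a)^[m + 1] h) 0 = 0 := IH j (by omega) (m + 1)
        have hj1 : iteratedDeriv (j + 1) ((Pop a)^[m] h) 0 = 0 := IH (j + 1) (by omega) m
        rw [hj, hj1] at this
        linarith
  have hder : ∀ k : ℕ, iteratedDeriv k h 0 = 0 := fun k => by simpa using key k 0
  -- h vanishes in a neighborhood of 0
  have hev : h =ᶠ[nhds 0] 0 := by
    obtain ⟨p, hp⟩ := h0S
    obtain ⟨r, hpr⟩ := hp
    have hcoeff : ∀ n : ℕ, (p n fun _ => (1 : ℝ)) = 0 := by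
      intro n
      have := hpr.factorial_smul (y := (1 : ℝ)) n
      rw [← iteratedDeriv_eq_iteratedFDeriv, hder n] at this
      have hne : (Nat.factorial n : ℝ) ≠ 0 := by
        exact_mod_cast Nat.factorial_ne_zero n
      have h2' : (Nat.factorial n : ℝ) * (p n fun _ => (1 : ℝ)) = 0 := by
        simpa [nsmul_eq_mul] using this
      exact (mul_eq_zero.mp h2').resolve_left hne
    have hball : ∀ y ∈ Metric.eball (0 : ℝ) r, h y = 0 := by
      intro y hy
      have hsum := hpr.hasSum (y := y) (by simpa using hy)
      have hterm : ∀ n : ℕ, (p n fun _ => y) = 0 := by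
        intro n
        have : (fun _ : Fin n => y) = fun _ : Fin n => y • (1 : ℝ) := by
          funext i; simp
        rw [this, ContinuousMultilinearMap.map_smul_univ, hcoeff n, smul_zero]
      rw [show (fun n => p n fun _ => y) = fun _ => (0 : ℝ) from funext hterm] at hsum
      have := hsum.tsum_eq
      simpa using this.symm
    have hmem : Metric.eball (0 : ℝ) r ∈ nhds (0 : ℝ) :=
      Metric.eball_mem_nhds 0 hpr.r_pos
    filter_upwards [hmem] with y hy using hball y hy
  -- identity principle on the preconnected set [-1, 0]
  have := hanal.eqOn_zero_of_preconnected_of_eventuallyEq_zero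
    isPreconnected_Icc (z₀ := 0) (by simp) hev
  intro x hx
  exact this hx
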